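/- Let n ≥ 1, let W be a random variable on a probability space with P(W > 0) = 1 and E[W^{−n/2}] < ∞, and let ρ ∈ ℝ satisfy e^{nρ}·(2π)^{n/2} ≤ E[W^{−n/2}]. Define h : ℝⁿ → ℝ by h(ξ) = e^{nρ}·(2π)^{n/2}·E[e^{−2π²|ξ|²W}]/E[W^{−n/2}]. Then e^{−nρ}·∫_{ℝⁿ} h(ξ)² dξ ≤ 2^{−n/2}. -/

import Mathlib

open MeasureTheory Filter Real
open scoped ENNReal Topology

/-- Let `W` be a.s. positive with `E[W^{−n/2}] < ∞` and let `ρ` satisfy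
`e^{nρ}·(2π)^{n/2} ≤ E[W^{−n/2}]`. For
`h(ξ) = e^{nρ}·(2π)^{n/2}·E[e^{−2π²|ξ|²W}]/E[W^{−n/2}]` (the Fourier transform of the
normal-variance mixture kernel), `e^{−nρ}·∫ h² ≤ 2^{−n/2}`. -/
theorem normal_variance_mixture_global_repulsion (n : ℕ) (hn : 1 ≤ n)
    (Ω : Type*) [MeasurableSpace Ω] (μ : Measure Ω) [IsProbabilityMeasure μ]
    (W : Ω → ℝ) (hW_meas : Measurable W)
    (hW_pos : μ {ω | 0 < W ω} = 1)
    (hW_int : Integrable (fun ω => W ω ^ (-(n : ℝ) / 2)) μ)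
    (ρ : ℝ)
    (hρ : Real.exp (n * ρ) * (2 * π) ^ ((n : ℝ) / 2) ≤ ∫ ω, W ω ^ (-(n : ℝ) / 2) ∂μ)
    (h : EuclideanSpace ℝ (Fin n) → ℝ)
    (hh : ∀ ξ : EuclideanSpace ℝ (Fin n),
      h ξ = Real.exp (n * ρ) * (2 * π) ^ ((n : ℝ) / 2) *
        (∫ ω, Real.exp (-2 * π ^ 2 * ‖ξ‖ ^ 2 * W ω) ∂μ) /
        ∫ ω, W ω ^ (-(n : ℝ) / 2) ∂μ) :
    Real.exp (-(n * ρ)) * (∫ ξ : EuclideanSpace ℝ (Fin n), h ξ ^ 2) ≤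
      (2 : ℝ) ^ (-(n : ℝ) / 2) := by
  have hπ : 0 < π := Real.pi_pos
  set s : ℝ := (n : ℝ) / 2 with hs
  set M : ℝ := ∫ ω, W ω ^ (-(n : ℝ) / 2) ∂μ with hM
  set c : ℝ := Real.exp (n * ρ) * (2 * π) ^ s with hc
  have hc_pos : 0 < c := by
    have : (0:ℝ) < (2 * π) ^ s := Real.rpow_pos_of_pos (by positivity) _
    positivity
  have hcM : c ≤ M := hρ
  have hM_pos : 0 < M := lt_of_lt_of_le hc_pos hcM
  -- a.e. positivity of W
  have hWae : ∀ᵐ ω ∂μ, 0 < W ω := by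
    rw [ae_iff]
    have hms : MeasurableSet {ω | 0 < W ω} := measurableSet_lt measurable_const hW_meas
    have heq : {ω | ¬ 0 < W ω} = {ω | 0 < W ω}ᶜ := rfl
    rw [heq, prob_compl_eq_zero_iff hms]
    exact hW_pos
  -- the mixed Gaussian average
  set g : EuclideanSpace ℝ (Fin n) → ℝ := fun ξ => ∫ ω, Real.exp (-2 * π ^ 2 * ‖ξ‖ ^ 2 * W ω) ∂μ with hgdef
  -- basic measurability
  have hX_meas : ∀ ξ : EuclideanSpace ℝ (Fin n), Measurable fun ω => Real.exp (-2 * π ^ 2 * ‖ξ‖ ^ 2 * W ω) :=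
    fun ξ => Real.measurable_exp.comp (measurable_const.mul hW_meas)
  have hY_meas : ∀ ξ : EuclideanSpace ℝ (Fin n), Measurable fun ω => Real.exp (-(4 * π ^ 2 * W ω) * ‖ξ‖ ^ 2) :=
    fun ξ => Real.measurable_exp.comp
      (((measurable_const.mul hW_meas).neg).mul measurable_const)
  -- membership in L² (bounded by 1)
  have hXmem : ∀ ξ : EuclideanSpace ℝ (Fin n), MemLp (fun ω => Real.exp (-2 * π ^ 2 * ‖ξ‖ ^ 2 * W ω)) 2 μ := by
    intro ξ
    refine MemLp.of_bound (hX_meas ξ).aestronglyMeasurable 1 ?_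
    filter_upwards [hWae] with ω hw
    rw [Real.norm_eq_abs, abs_of_pos (Real.exp_pos _), Real.exp_le_one_iff]
    have h1 : -2 * π ^ 2 * ‖ξ‖ ^ 2 ≤ 0 := by nlinarith [sq_nonneg π, sq_nonneg ‖ξ‖]
    exact mul_nonpos_of_nonpos_of_nonneg h1 hw.le
  have hY_int : ∀ ξ : EuclideanSpace ℝ (Fin n), Integrable (fun ω => Real.exp (-(4 * π ^ 2 * W ω) * ‖ξ‖ ^ 2)) μ := by
    intro ξ
    rw [← memLp_one_iff_integrable]
    refine MemLp.of_bound (hY_meas ξ).aestronglyMeasurable 1 ?_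
    filter_upwards [hWae] with ω hw
    rw [Real.norm_eq_abs, abs_of_pos (Real.exp_pos _), Real.exp_le_one_iff]
    have h1 : -(4 * π ^ 2 * W ω) ≤ 0 := by nlinarith [sq_nonneg π]
    exact mul_nonpos_of_nonpos_of_nonneg h1 (sq_nonneg _)
  -- Jensen / Cauchy–Schwarz: (∫ X)² ≤ ∫ X²
  have hJensen : ∀ ξ : EuclideanSpace ℝ (Fin n), g ξ ^ 2 ≤ ∫ ω, Real.exp (-(4 * π ^ 2 * W ω) * ‖ξ‖ ^ 2) ∂μ := by
    intro ξ
    have h0 := ProbabilityTheory.variance_nonneg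
      (fun ω => Real.exp (-2 * π ^ 2 * ‖ξ‖ ^ 2 * W ω)) μ
    rw [ProbabilityTheory.variance_eq_sub (hXmem ξ)] at h0
    have hsq : (∫ ω, ((fun ω => Real.exp (-2 * π ^ 2 * ‖ξ‖ ^ 2 * W ω)) ^ 2) ω ∂μ)
        = ∫ ω, Real.exp (-(4 * π ^ 2 * W ω) * ‖ξ‖ ^ 2) ∂μ := by
      refine integral_congr_ae (ae_of_all _ fun ω => ?_)
      simp only [Pi.pow_apply]
      rw [← Real.exp_nat_mul]
      congr 1
      push_cast
      ring
    rw [hsq] at h0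
    linarith
  -- joint measurability for Tonelli
  have hjoint : Measurable fun p : EuclideanSpace ℝ (Fin n) × Ω =>
      ENNReal.ofReal (Real.exp (-(4 * π ^ 2 * W p.2) * ‖p.1‖ ^ 2)) := by
    refine ENNReal.measurable_ofReal.comp (Real.measurable_exp.comp ?_)
    exact ((measurable_const.mul (hW_meas.comp measurable_snd)).neg).mul
      ((measurable_fst.norm).pow_const 2)
  set I : ℝ≥0∞ := ∫⁻ ξ : EuclideanSpace ℝ (Fin n), ∫⁻ ω, ENNReal.ofReal
      (Real.exp (-(4 * π ^ 2 * W ω) * ‖ξ‖ ^ 2)) ∂μ with hI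
  have hswap : I = ∫⁻ ω, (∫⁻ ξ : EuclideanSpace ℝ (Fin n), ENNReal.ofReal
      (Real.exp (-(4 * π ^ 2 * W ω) * ‖ξ‖ ^ 2))) ∂μ :=
    lintegral_lintegral_swap hjoint.aemeasurable
  -- inner Gaussian integral
  have hinner : ∀ ω, 0 < W ω → (∫⁻ ξ : EuclideanSpace ℝ (Fin n), ENNReal.ofReal
      (Real.exp (-(4 * π ^ 2 * W ω) * ‖ξ‖ ^ 2)))
      = ENNReal.ofReal ((4 * π) ^ (-s) * W ω ^ (-(n : ℝ) / 2)) := by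
    intro ω hw
    have hb : 0 < 4 * π ^ 2 * W ω := by positivity
    have hbC : (0:ℝ) < (Complex.ofReal (4 * π ^ 2 * W ω)).re := by rw [Complex.ofReal_re]; exact hb
    have hint : Integrable (fun ξ : EuclideanSpace ℝ (Fin n) => Real.exp (-(4 * π ^ 2 * W ω) * ‖ξ‖ ^ 2)) := by
      have := (GaussianFourier.integrable_cexp_neg_mul_sq_norm_add (V := EuclideanSpace ℝ (Fin n))
        (b := Complex.ofReal (4 * π ^ 2 * W ω)) hbC 0 0).norm
      refine this.congr (ae_of_all _ fun ξ => ?_)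
      simp only [Complex.norm_exp]
      congr 1
      simp only [zero_mul, add_zero, ← Complex.ofReal_pow, ← Complex.ofReal_neg,
        ← Complex.ofReal_mul, Complex.ofReal_re]
    rw [← MeasureTheory.ofReal_integral_eq_lintegral_ofReal hint
      (ae_of_all _ fun ξ => (Real.exp_pos _).le)]
    congr 1
    rw [GaussianFourier.integral_rexp_neg_mul_sq_norm hb, finrank_euclideanSpace_fin]
    have h1 : π / (4 * π ^ 2 * W ω) = (4 * π)⁻¹ * (W ω)⁻¹ := by
      field_simp
    rw [h1, Real.mul_rpow (by positivity) (by positivity),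
      Real.inv_rpow (by positivity), Real.inv_rpow hw.le,
      ← Real.rpow_neg (by positivity), ← Real.rpow_neg hw.le, neg_div]
  -- evaluate I
  have houter : I = ENNReal.ofReal ((4 * π) ^ (-s) * M) := by
    rw [hswap]
    have hcong : ∀ᵐ ω ∂μ, (∫⁻ ξ : EuclideanSpace ℝ (Fin n), ENNReal.ofReal
        (Real.exp (-(4 * π ^ 2 * W ω) * ‖ξ‖ ^ 2)))
        = ENNReal.ofReal ((4 * π) ^ (-s)) * ENNReal.ofReal (W ω ^ (-(n : ℝ) / 2)) := by
      filter_upwards [hWae] with ω hw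
      rw [hinner ω hw, ENNReal.ofReal_mul (by positivity)]
    rw [lintegral_congr_ae hcong, lintegral_const_mul' _ _ ENNReal.ofReal_ne_top,
      ← MeasureTheory.ofReal_integral_eq_lintegral_ofReal hW_int ?_,
      ← ENNReal.ofReal_mul (by positivity)]
    filter_upwards [hWae] with ω hw
    exact Real.rpow_nonneg hw.le _
  -- measurability of g
  have hjm : StronglyMeasurable fun p : EuclideanSpace ℝ (Fin n) × Ω =>
      Real.exp (-2 * π ^ 2 * ‖p.1‖ ^ 2 * W p.2) := by
    refine (Real.measurable_exp.comp ?_).stronglyMeasurable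
    exact ((measurable_const.mul ((measurable_fst.norm).pow_const 2))).mul
      (hW_meas.comp measurable_snd)
  have hg_meas : StronglyMeasurable g := hjm.integral_prod_right'
  have hg2_meas : Measurable fun ξ : EuclideanSpace ℝ (Fin n) => g ξ ^ 2 := (hg_meas.measurable).pow_const 2
  -- lintegral bound
  have hle : (∫⁻ ξ : EuclideanSpace ℝ (Fin n), ENNReal.ofReal (g ξ ^ 2)) ≤ I := by
    refine lintegral_mono fun ξ => ?_
    calc ENNReal.ofReal (g ξ ^ 2)
        ≤ ENNReal.ofReal (∫ ω, Real.exp (-(4 * π ^ 2 * W ω) * ‖ξ‖ ^ 2) ∂μ) :=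
          ENNReal.ofReal_le_ofReal (hJensen ξ)
      _ = ∫⁻ ω, ENNReal.ofReal (Real.exp (-(4 * π ^ 2 * W ω) * ‖ξ‖ ^ 2)) ∂μ :=
          MeasureTheory.ofReal_integral_eq_lintegral_ofReal (hY_int ξ)
            (ae_of_all _ fun ω => (Real.exp_pos _).le)
  -- integral bound for g²
  have hTle : (∫ ξ : EuclideanSpace ℝ (Fin n), g ξ ^ 2) ≤ (4 * π) ^ (-s) * M := by
    rw [MeasureTheory.integral_eq_lintegral_of_nonneg_ae
      (ae_of_all _ fun ξ => sq_nonneg (g ξ)) hg2_meas.aestronglyMeasurable]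
    refine ENNReal.toReal_le_of_le_ofReal (by positivity) ?_
    rw [← houter]
    exact hle
  have hT0 : (0:ℝ) ≤ ∫ ξ : EuclideanSpace ℝ (Fin n), g ξ ^ 2 :=
    integral_nonneg fun ξ => sq_nonneg _
  -- rewrite ∫ h²
  have hH : (∫ ξ : EuclideanSpace ℝ (Fin n), h ξ ^ 2) = (c / M) ^ 2 * ∫ ξ : EuclideanSpace ℝ (Fin n), g ξ ^ 2 := by
    have hfe : (fun ξ : EuclideanSpace ℝ (Fin n) => h ξ ^ 2) = fun ξ : EuclideanSpace ℝ (Fin n) => (c / M) ^ 2 * g ξ ^ 2 := by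
      funext ξ
      rw [hh ξ]
      ring
    rw [hfe, integral_const_mul]
  -- final computation
  have key : (2 * π) ^ s * (4 * π) ^ (-s) = (2 : ℝ) ^ (-(n : ℝ) / 2) := by
    rw [neg_div, ← hs, Real.rpow_neg (by positivity : (0:ℝ) ≤ 4 * π),
      Real.rpow_neg (by norm_num : (0:ℝ) ≤ 2),
      ← div_eq_mul_inv, ← Real.div_rpow (by positivity : (0:ℝ) ≤ 2 * π) (by positivity : (0:ℝ) ≤ 4 * π)]
    have h2 : (2 * π) / (4 * π) = (2:ℝ)⁻¹ := by
      field_simp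
      ring
    rw [h2, Real.inv_rpow (by norm_num : (0:ℝ) ≤ 2)]
  calc Real.exp (-(n * ρ)) * (∫ ξ : EuclideanSpace ℝ (Fin n), h ξ ^ 2)
      = Real.exp (-(n * ρ)) * ((c / M) ^ 2 * ∫ ξ : EuclideanSpace ℝ (Fin n), g ξ ^ 2) := by rw [hH]
    _ ≤ Real.exp (-(n * ρ)) * ((c / M) ^ 2 * ((4 * π) ^ (-s) * M)) := by
        have := mul_le_mul_of_nonneg_left hTle (sq_nonneg (c / M))
        exact mul_le_mul_of_nonneg_left this (Real.exp_pos _).le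
    _ = (2 * π) ^ s * (4 * π) ^ (-s) * (c / M) := by
        rw [hc, Real.exp_neg]
        field_simp
    _ ≤ (2 * π) ^ s * (4 * π) ^ (-s) * 1 := by
        refine mul_le_mul_of_nonneg_left ?_ (by positivity)
        exact (div_le_one hM_pos).mpr hcM
    _ = (2 : ℝ) ^ (-(n : ℝ) / 2) := by rw [mul_one, key]
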